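/- The 4×5 latin rectangle with rows [0,3,4,2,1], [4,0,1,3,2], [2,4,0,1,3], [3,1,2,0,4] is K_{3,3}-free, and its unique extension to a 5×5 latin square (by adding the row [1,2,3,4,0]) is not K_{3,3}-free. -/
import Mathlib


/-- A latin square of order `n` as a function: each row and each column is injective. -/
def IsLatin {n : ℕ} (L : Fin n → Fin n → Fin n) : Prop :=
  (∀ r, Function.Injective (L r)) ∧ (∀ c, Function.Injective (fun r => L r c))

/-- An `m×n` latin rectangle (or square, if `m = n`) is `K_{3,3}`-free if it contains no
`K_{3,3}` pattern: three distinct rows, three distinct columns, with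
`L(r1,c2)=L(r2,c1)`, `L(r2,c3)=L(r3,c2)`, `L(r3,c1)=L(r1,c3)` and the three common
values pairwise distinct. -/
def K33Free {m n : ℕ} (L : Fin m → Fin n → Fin n) : Prop :=
  ¬ ∃ r1 r2 r3 : Fin m, ∃ c1 c2 c3 : Fin n,
      r1 ≠ r2 ∧ r1 ≠ r3 ∧ r2 ≠ r3 ∧ c1 ≠ c2 ∧ c1 ≠ c3 ∧ c2 ≠ c3 ∧
      L r1 c2 = L r2 c1 ∧ L r2 c3 = L r3 c2 ∧ L r3 c1 = L r1 c3 ∧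
      L r1 c2 ≠ L r2 c3 ∧ L r1 c2 ≠ L r3 c1 ∧ L r2 c3 ≠ L r3 c1

/-- The `4×5` latin rectangle. -/
def Rect : Fin 4 → Fin 5 → Fin 5 :=
  ![![0, 3, 4, 2, 1], ![4, 0, 1, 3, 2], ![2, 4, 0, 1, 3], ![3, 1, 2, 0, 4]]

/-- Its extension to a `5×5` latin square by the row `[1,2,3,4,0]`. -/
def Sq : Fin 5 → Fin 5 → Fin 5 :=
  ![![0, 3, 4, 2, 1], ![4, 0, 1, 3, 2], ![2, 4, 0, 1, 3], ![3, 1, 2, 0, 4], ![1, 2, 3, 4, 0]]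

/-- The rectangle `Rect` is `K_{3,3}`-free; its unique latin-square extension is `Sq`,
which is not `K_{3,3}`-free. -/
theorem stmt16 :
    K33Free Rect ∧
    (∀ M : Fin 5 → Fin 5 → Fin 5, IsLatin M →
      (∀ (i : Fin 4) (j : Fin 5), M i.castSucc j = Rect i j) → M = Sq) ∧
    ¬ K33Free Sq := by
  refine ⟨by unfold K33Free Rect; decide, ?_, by unfold K33Free Sq; decide⟩
  intro M ⟨hrow, hcol⟩ hM
  have key : ∀ j : Fin 5, M 4 j = Sq 4 j := by
    intro j
    have h : ∀ k : Fin 4, M 4 j ≠ Rect k j := by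
      intro k hk
      rw [← hM k j] at hk
      have := hcol j hk
      exact absurd this (by fin_cases k <;> decide)
    have h0 := h 0
    have h1 := h 1
    have h2 := h 2
    have h3 := h 3
    generalize hx : M 4 j = x at *
    fin_cases j <;> fin_cases x <;> simp_all [Rect, Sq]
  funext i j
  match i with
  | ⟨0, _⟩ => exact hM 0 j
  | ⟨1, _⟩ => exact hM 1 j
  | ⟨2, _⟩ => exact hM 2 j
  | ⟨3, _⟩ => exact hM 3 j
  | ⟨4, _⟩ => exact key j
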